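/- (Correctness of the reduction in Theorem 2.) The 3SAT instance φ is satisfiable if and only if there exists an assignment α : {1,…,n} → {true,false} such that for every clause index j ∈ {1,…,m} there is a directed s-t path in G_φ that follows α and has total cost 0 under c^j. -/

import Mathlib

/-- Vertices of the graph `G_φ`: source `s`, sink `t`, and for each variable index
`i ∈ {1,…,n}` the four vertices `tᵢ¹, tᵢ², fᵢ¹, fᵢ²`.  Here `Vtx.mid i second isTrue`
is `tᵢ` if `isTrue = true`, `fᵢ` if `isTrue = false`; superscript `2` iff `second = true`. -/
inductive Vtx (n : ℕ) : Type where
  | s : Vtx n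
  | t : Vtx n
  | mid (i : Fin n) (second : Bool) (isTrue : Bool) : Vtx n
deriving DecidableEq

/-- The directed edges of `G_φ`. -/
def GEdge (n : ℕ) : Vtx n → Vtx n → Prop :=
  fun a b =>
    match a, b with
    | .s, .mid i false _ => (i : ℕ) = 0
    | .mid i false _, .mid j false _ => (j : ℕ) = (i : ℕ) + 1
    | .mid i true _, .mid j true _ => (j : ℕ) = (i : ℕ) + 1
    | .mid i false v, .mid j true w => j = i ∧ w = v
    | .mid i true _, .t => (i : ℕ) = n - 1
    | _, _ => False

/-- The edge costs `c^j` determined by a clause `C` (a set of literals `(i, ε)`):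
a bridge edge `(tᵢ¹,tᵢ²)` (resp. `(fᵢ¹,fᵢ²)`) costs `0` if `(i,true) ∈ C`
(resp. `(i,false) ∈ C`) and `1` otherwise; all non-bridge edges cost `0`. -/
def cost (n : ℕ) (C : Finset (Fin n × Bool)) : Vtx n → Vtx n → ℕ
  | .mid i false v, .mid j true w =>
      if j = i ∧ w = v then (if (i, v) ∈ C then 0 else 1) else 0
  | _, _ => 0

/-- The cost of a path (list of vertices) under the scenario of clause `C`:
the sum of the edge costs over consecutive pairs. -/
def pathCost (n : ℕ) (C : Finset (Fin n × Bool)) (P : List (Vtx n)) : ℕ :=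
  ((P.zip P.tail).map fun q => cost n C q.1 q.2).sum

/-- A directed `s`-`t` path in `G_φ`: consecutive pairs are edges, vertices are
pairwise distinct, the first vertex is `s` and the last is `t`. -/
def isSTPath (n : ℕ) (P : List (Vtx n)) : Prop :=
  P.Chain' (GEdge n) ∧ P.Nodup ∧ P.head? = some Vtx.s ∧ P.getLast? = some Vtx.t

/-- A path follows the assignment `α` if for every index `i`, each of its vertices with
index `i` is a `t`-vertex when `α i = true` and an `f`-vertex when `α i = false`. -/
def follows (n : ℕ) (α : Fin n → Bool) (P : List (Vtx n)) : Prop :=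
  ∀ (i : Fin n) (second v : Bool), Vtx.mid i second v ∈ P → v = α i

/-- The assignment `α` satisfies the clause `C` if it makes some literal of `C` true. -/
def satisfiesClause (n : ℕ) (α : Fin n → Bool) (C : Finset (Fin n × Bool)) : Prop :=
  ∃ l ∈ C, α l.1 = l.2

-- zip of range' with its shift
lemma zip_range'_shift : ∀ (c s : ℕ),
    ((List.range' s (c+1)).zip (List.range' (s+1) c)) =
      (List.range' s c).map (fun k => (k, k+1)) := by
  intro c
  induction c with
  | zero => intro s; simp
  | succ c ih =>
    intro s
    rw [List.range'_succ (s := s), List.range'_succ (s := s+1), List.zip_cons_cons,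
        ← List.range'_succ (s := s+1), ih (s+1), List.range'_succ (s := s)]
    simp

lemma zip_tail_range' (c s : ℕ) :
    ((List.range' s c).zip (List.range' s c).tail) =
      (List.range' s (c-1)).map (fun k => (k, k+1)) := by
  cases c with
  | zero => simp
  | succ c =>
    have h : (List.range' s (c+1)).tail = List.range' (s+1) c := by
      rw [List.range'_succ]; rfl
    rw [h]
    simpa using zip_range'_shift c s

def gpath (n : ℕ) (α : Fin n → Bool) (i : ℕ) : ℕ → Vtx n := fun k =>
  if k = 0 then .s
  else if h : k ≤ i + 1 ∧ k - 1 < n then .mid ⟨k-1, h.2⟩ false (α ⟨k-1, h.2⟩)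
  else if h : k ≤ n + 1 ∧ k - 2 < n then .mid ⟨k-2, h.2⟩ true (α ⟨k-2, h.2⟩)
  else .t

lemma gpath_edge (n : ℕ) (α : Fin n → Bool) (i : ℕ) (hi : i < n)
    (k : ℕ) (hk : k + 1 < n + 3) :
    GEdge n (gpath n α i k) (gpath n α i (k+1)) := by
  unfold gpath
  split_ifs with h1 h2 h3 h4 h5 h6 h7 h8 h9 h10 h11 <;>
    simp_all [GEdge] <;> omega

lemma gpath_inj (n : ℕ) (α : Fin n → Bool) (i : ℕ) (hi : i < n)
    (a b : ℕ) (ha : a < n + 3) (hb : b < n + 3)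
    (h : gpath n α i a = gpath n α i b) : a = b := by
  unfold gpath at h
  split_ifs at h <;> simp_all <;> omega

lemma gpath_cost (n : ℕ) (α : Fin n → Bool) (C : Finset (Fin n × Bool))
    (i : ℕ) (hi : i < n) (hmem : (⟨i, hi⟩, α ⟨i, hi⟩) ∈ C)
    (k : ℕ) (hk : k + 1 < n + 3) :
    cost n C (gpath n α i k) (gpath n α i (k+1)) = 0 := by
  unfold gpath
  split_ifs with h1 h2 h3 h4 h5 h6 h7 h8 h9 h10 h11 <;>
    simp_all [cost] <;>
    first
      | omega
      | (intro h; exfalso; omega)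
      | (intro h _; exfalso; omega)
      | · have hk1 : k - 1 = i := by omega
          simp only [hk1]
          exact hmem

lemma gpath_follows (n : ℕ) (α : Fin n → Bool) (i : ℕ) (k : ℕ)
    (i' : Fin n) (second v : Bool) (h : gpath n α i k = .mid i' second v) :
    v = α i' := by
  unfold gpath at h
  split_ifs at h <;>
    first
    | (rw [Vtx.mid.injEq] at h; obtain ⟨rfl, -, rfl⟩ := h; rfl)
    | exact absurd h (by simp)

lemma forward_path (n : ℕ) (α : Fin n → Bool) (C : Finset (Fin n × Bool))
    (i : Fin n) (hmem : (i, α i) ∈ C) :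
    ∃ P : List (Vtx n), isSTPath n P ∧ follows n α P ∧ pathCost n C P = 0 := by
  refine ⟨(List.range (n+3)).map (gpath n α i), ⟨?_, ?_, ?_, ?_⟩, ?_, ?_⟩
  · change List.IsChain (GEdge n) _
    rw [List.isChain_map]
    exact (List.isChain_range_succ _ (n+2)).2 fun k hk =>
      gpath_edge n α i i.isLt k (by omega)
  · exact (List.nodup_range).map_on fun a ha b hb h =>
      gpath_inj n α i i.isLt a b (List.mem_range.1 ha) (List.mem_range.1 hb) h
  · rw [List.head?_map]
    have : List.range (n+3) = 0 :: List.range' 1 (n+2) := by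
      rw [List.range_eq_range', List.range'_succ]
    rw [this]
    simp [gpath]
  · have : List.range (n+3) = List.range (n+2) ++ [n+2] := List.range_succ
    rw [this, List.map_append]
    simp only [List.map_cons, List.map_nil, List.getLast?_concat]
    have hi := i.isLt
    simp only [gpath]
    rw [if_neg (by omega), dif_neg (by omega), dif_neg (by omega)]
  · intro i' second v hv
    obtain ⟨k, -, hk⟩ := List.mem_map.1 hv
    exact gpath_follows n α i k i' second v hk
  · unfold pathCost
    have ht : (List.map (gpath n α i) (List.range (n+3))).tail
        = List.map (gpath n α i) (List.range (n+3)).tail := by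
      cases h : List.range (n+3) <;> simp
    rw [ht, List.zip_map, List.range_eq_range', zip_tail_range']
    simp only [List.map_map]
    apply List.sum_eq_zero
    intro x hx
    obtain ⟨k, hk, rfl⟩ := List.mem_map.1 hx
    rw [List.mem_range'] at hk
    exact gpath_cost n α C i i.isLt hmem k (by omega)

lemma exists_cross {V : Type*} (R : V → V → Prop) (p : V → Prop) :
    ∀ l : List V, l.Chain' R → (∃ a, l.head? = some a ∧ p a) →
      (∃ b, l.getLast? = some b ∧ ¬ p b) →
      ∃ q ∈ l.zip l.tail, p q.1 ∧ ¬ p q.2 ∧ R q.1 q.2 := by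
  intro l
  induction l with
  | nil => simp
  | cons a l ih =>
    cases l with
    | nil =>
      rintro - ⟨x, hx, hpx⟩ ⟨y, hy, hpy⟩
      simp at hx hy
      subst hx; subst hy; exact absurd hpx hpy
    | cons b l =>
      rintro hch ⟨x, hx, hpx⟩ hl
      simp only [List.head?_cons, Option.some.injEq] at hx
      subst hx
      change List.IsChain _ _ at hch
      rw [List.isChain_cons_cons] at hch
      by_cases hb : p b
      · obtain ⟨q, hq, h⟩ := ih hch.2 ⟨b, rfl, hb⟩
          (by rwa [List.getLast?_cons_cons] at hl)
        refine ⟨q, ?_, h⟩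
        simp only [List.tail_cons, List.zip_cons_cons]
        exact List.mem_cons_of_mem _ hq
      · refine ⟨(a, b), ?_, hpx, hb, hch.1⟩
        simp

def firstLayer {n : ℕ} : Vtx n → Prop
  | .s => True
  | .mid _ false _ => True
  | _ => False

lemma bridge_of (n : ℕ) (a b : Vtx n) (hpa : firstLayer a)
    (hpb : ¬ firstLayer b) (hR : GEdge n a b) :
    ∃ i v, a = .mid i false v ∧ b = .mid i true v := by
  cases a with
  | s =>
    cases b with
    | s => exact absurd hR (by simp [GEdge])
    | t => exact absurd hR (by simp [GEdge])
    | mid j second w =>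
      cases second with
      | false => exact absurd (trivial : firstLayer (Vtx.mid j false w)) hpb
      | true => exact absurd hR (by simp [GEdge])
  | t => exact absurd hpa (fun h => h)
  | mid i second v =>
    cases second with
    | true => exact absurd hpa (fun h => h)
    | false =>
      cases b with
      | s => exact absurd hR (by simp [GEdge])
      | t => exact absurd hR (by simp [GEdge])
      | mid j second' w =>
        cases second' with
        | false => exact absurd (trivial : firstLayer (Vtx.mid j false w)) hpb
        | true =>
          obtain ⟨rfl, rfl⟩ : j = i ∧ w = v := hR
          exact ⟨_, _, rfl, rfl⟩

lemma reverse_clause (n : ℕ) (α : Fin n → Bool) (C : Finset (Fin n × Bool))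
    (P : List (Vtx n)) (hP : isSTPath n P) (hf : follows n α P)
    (hc : pathCost n C P = 0) : ∃ l ∈ C, α l.1 = l.2 := by
  obtain ⟨hch, -, hhd, hlast⟩ := hP
  obtain ⟨⟨a, b⟩, hq, hpa, hpb, hR⟩ := exists_cross (GEdge n) firstLayer P hch
    ⟨Vtx.s, hhd, trivial⟩ ⟨Vtx.t, hlast, fun h => h⟩
  obtain ⟨i, v, rfl, rfl⟩ := bridge_of n a b hpa hpb hR
  have hcost : cost n C (Vtx.mid i false v) (Vtx.mid i true v) = 0 := by
    rw [pathCost, List.sum_eq_zero_iff] at hc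
    exact hc _ (List.mem_map.2 ⟨_, hq, rfl⟩)
  rw [cost, if_pos ⟨rfl, rfl⟩] at hcost
  have hmem : (i, v) ∈ C := by
    by_contra hcon
    rw [if_neg hcon] at hcost
    exact one_ne_zero hcost
  have hv : v = α i := hf i false v (List.of_mem_zip hq).1
  exact ⟨(i, v), hmem, hv.symm⟩

/-- Correctness of the reduction: the 3SAT instance `φ = (C₁,…,C_m)` is satisfiable iff
there is an assignment `α` such that for every clause index `j` there is a directed
`s`-`t` path in `G_φ` following `α` with total cost `0` under `c^j`. -/
theorem stmt8 (n m : ℕ) (hn : 1 ≤ n) (hm : 1 ≤ m)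
    (C : Fin m → Finset (Fin n × Bool)) (hC : ∀ j, (C j).card ≤ 3) :
    (∃ α : Fin n → Bool, ∀ j : Fin m, satisfiesClause n α (C j)) ↔
    (∃ α : Fin n → Bool, ∀ j : Fin m,
        ∃ P : List (Vtx n), isSTPath n P ∧ follows n α P ∧ pathCost n (C j) P = 0) := by
  constructor
  · rintro ⟨α, hα⟩
    refine ⟨α, fun j => ?_⟩
    obtain ⟨⟨i, ε⟩, hmem, hval⟩ := hα j
    exact forward_path n α (C j) i (by simp only at hval; rw [hval]; exact hmem)
  · rintro ⟨α, hα⟩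
    refine ⟨α, fun j => ?_⟩
    obtain ⟨P, hP, hf, hc⟩ := hα j
    exact reverse_clause n α (C j) P hP hf hc
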